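/- Let L, M, N ≥ 1 be integers and let k ≥ 1 be an odd integer. Let W(z) = z^{−M}·B(z)^L for z ≠ 0, where B(z) is the 2×2 matrix with rows (1, 1) and (z^k, 1). Suppose 𝓡 : ℂ×ℂ → M₂(ℂ) is a left reproducing kernel of order N for W on the unit circle. Define 𝔯(ω,ζ) := (1/2)·[ ω^k·(𝓡(ω²,ζ²)_{1,1} + ζ^k·𝓡(ω²,ζ²)_{1,2}) + 𝓡(ω²,ζ²)_{2,1} + ζ^k·𝓡(ω²,ζ²)_{2,2} ]. Then for every polynomial p of the form p(ω) = P₁(ω²) + ω^k·P₂(ω²) with P₁, P₂ complex polynomials of degree ≤ N−1, and every ζ ∈ ℂ: ∮_{|ω|=1} p(ω)·2·ω^{1−2M−k}·(1+ω^k)^L·𝔯(ω,ζ) dω = p(ζ). -/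

import Mathlib

open Real Set


/-- An `m × n` matrix polynomial of degree at most `d`:
`P z = ∑_{ℓ=0}^{d} z ^ ℓ • C ℓ` for some constant matrices `C ℓ`. -/
def IsMatPoly (m n d : ℕ) (P : ℂ → Matrix (Fin m) (Fin n) ℂ) : Prop :=
  ∃ C : ℕ → Matrix (Fin m) (Fin n) ℂ,
    ∀ z : ℂ, P z = ∑ ℓ ∈ Finset.range (d + 1), z ^ ℓ • C ℓ

/-- A scalar polynomial of degree at most `d`. -/
def IsPolyDeg (d : ℕ) (f : ℂ → ℂ) : Prop :=
  ∃ c : ℕ → ℂ, ∀ z : ℂ, f z = ∑ ℓ ∈ Finset.range (d + 1), c ℓ * z ^ ℓ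

/-- Entrywise counterclockwise integral of a matrix-valued function over the circle
`|z| = ρ` centered at the origin. -/
noncomputable def circleIntegralM {m n : ℕ} (ρ : ℝ) (F : ℂ → Matrix (Fin m) (Fin n) ℂ) :
    Matrix (Fin m) (Fin n) ℂ :=
  Matrix.of fun i j => circleIntegral (fun z => F z i j) 0 ρ

/-- `R` is a (matrix-valued) left reproducing kernel of order `N` for the weight `W` on
the circle `|z| = ρ`. -/
def IsLeftRKCircleM (r N : ℕ) (ρ : ℝ) (W : ℂ → Matrix (Fin r) (Fin r) ℂ)
    (R : ℂ → ℂ → Matrix (Fin r) (Fin r) ℂ) : Prop :=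
  (∀ z : ℂ, IsMatPoly r r (N - 1) fun w => R w z) ∧
  (∀ w : ℂ, IsMatPoly r r (N - 1) fun z => R w z) ∧
  ∀ P : ℂ → Matrix (Fin r) (Fin r) ℂ, IsMatPoly r r (N - 1) P →
    ∀ z : ℂ, circleIntegralM ρ (fun w => P w * W w * R w z) = P z

/-- `K` is a scalar left reproducing kernel of order `N` for the weight `W` on the circle
`|z| = ρ`. -/
def IsLeftRKCircleS (N : ℕ) (ρ : ℝ) (W : ℂ → ℂ) (K : ℂ → ℂ → ℂ) : Prop :=
  (∀ z : ℂ, IsPolyDeg (N - 1) fun w => K w z) ∧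
  (∀ w : ℂ, IsPolyDeg (N - 1) (K w)) ∧
  ∀ p : ℂ → ℂ, IsPolyDeg (N - 1) p →
    ∀ z : ℂ, circleIntegral (fun w => p w * W w * K w z) 0 ρ = p z

/-- For the weight `W(z) = z^{-M} B(z)^L` with `B(z) = !![1,1; z^k,1]`
and odd `k`, the scalar kernel `𝔯` built from the matrix reproducing kernel `𝓡`
reproduces all polynomials of the form `P₁(ω²) + ω^k P₂(ω²)` against the scalar Jacobi
weight `2 ω^{1-2M-k} (1+ω^k)^L` on the unit circle. -/

lemma circleMap_add_pi (θ : ℝ) : circleMap 0 1 (θ + π) = - circleMap 0 1 θ := by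
  simp only [circleMap, Complex.ofReal_add, add_mul, Complex.exp_add, Complex.exp_pi_mul_I]
  ring

lemma circleMap_two_mul (θ : ℝ) : circleMap 0 1 θ ^ 2 = circleMap 0 1 (2 * θ) := by
  simp only [circleMap, Complex.ofReal_mul, Complex.ofReal_ofNat]
  rw [show (2:ℂ) * (θ:ℂ) * Complex.I = (θ:ℂ)*Complex.I + (θ:ℂ)*Complex.I by push_cast; ring,
    Complex.exp_add]
  norm_num
  ring

lemma circleIntegral_neg (f : ℂ → ℂ) :
    (∮ z in C(0, 1), f (-z)) = -∮ z in C(0, 1), f z := by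
  simp only [circleIntegral, deriv_circleMap]
  set h : ℝ → ℂ := fun θ => (circleMap 0 1 θ * Complex.I) • f (circleMap 0 1 θ) with hh
  have hper : Function.Periodic h (2 * π) := fun θ => by
    simp [hh, (periodic_circleMap 0 1 θ)]
  have key : ∀ θ : ℝ, (circleMap 0 1 θ * Complex.I) • f (-circleMap 0 1 θ) = -h (θ + π) := by
    intro θ
    simp only [hh, circleMap_add_pi, smul_eq_mul]
    ring
  calc (∫ θ in (0:ℝ)..2 * π, (circleMap 0 1 θ * Complex.I) • f (-circleMap 0 1 θ))
      = ∫ θ in (0:ℝ)..2 * π, -h (θ + π) := by simp only [key]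
    _ = -∫ θ in (0:ℝ)..2 * π, h (θ + π) := by rw [intervalIntegral.integral_neg]
    _ = -∫ θ in π..(2 * π + π), h θ := by rw [intervalIntegral.integral_comp_add_right]; norm_num
    _ = -∫ θ in (0:ℝ)..2 * π, h θ := by
        have := hper.intervalIntegral_add_eq π 0
        rw [show π + 2 * π = 2 * π + π by ring] at this
        rw [this]; norm_num

lemma circleIntegral_sq (g : ℂ → ℂ) (hg : ContinuousOn g (Metric.sphere (0:ℂ) 1)) :
    (∮ z in C(0, 1), z * g (z ^ 2)) = ∮ z in C(0, 1), g z := by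
  simp only [circleIntegral, deriv_circleMap]
  set h : ℝ → ℂ := fun θ => (circleMap 0 1 θ * Complex.I) • g (circleMap 0 1 θ) with hh
  have hcont : Continuous h := by
    apply Continuous.fun_smul
    · exact (continuous_circleMap 0 1).mul continuous_const
    · exact hg.comp_continuous (continuous_circleMap 0 1)
        (fun θ => circleMap_mem_sphere 0 zero_le_one θ)
  have hper : Function.Periodic h (2 * π) := fun θ => by
    simp [hh, (periodic_circleMap 0 1 θ)]
  have key : ∀ θ : ℝ, (circleMap 0 1 θ * Complex.I) • (circleMap 0 1 θ * g (circleMap 0 1 θ ^ 2))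
      = h (2 * θ) := by
    intro θ
    simp only [hh, circleMap_two_mul, smul_eq_mul, ← circleMap_two_mul]
    ring
  calc (∫ θ in (0:ℝ)..2 * π, (circleMap 0 1 θ * Complex.I) •
          (circleMap 0 1 θ * g (circleMap 0 1 θ ^ 2)))
      = ∫ θ in (0:ℝ)..2 * π, h (2 * θ) := by simp only [key]
    _ = (2:ℝ)⁻¹ • ∫ θ in (0:ℝ)..(2 * (2 * π)), h θ := by
        rw [intervalIntegral.integral_comp_mul_left h (two_ne_zero)]; norm_num
    _ = ∫ θ in (0:ℝ)..2 * π, h θ := by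
        have h1 : IntervalIntegrable h MeasureTheory.volume 0 (2 * π) :=
          hcont.intervalIntegrable _ _
        have h2 : IntervalIntegrable h MeasureTheory.volume (2 * π) (2 * (2 * π)) :=
          hcont.intervalIntegrable _ _
        rw [← intervalIntegral.integral_add_adjacent_intervals h1 h2]
        have := hper.intervalIntegral_add_eq (2 * π) 0
        rw [show (2:ℝ) * π + 2 * π = 2 * (2 * π) by ring] at this
        rw [this]
        norm_num
        ring


lemma eig (t : ℂ) : ∀ L : ℕ,
    (t * ((!![1, 1; t ^ 2, 1] : Matrix (Fin 2) (Fin 2) ℂ) ^ L) 0 0 +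
        ((!![1, 1; t ^ 2, 1] : Matrix (Fin 2) (Fin 2) ℂ) ^ L) 1 0 = (1 + t) ^ L * t) ∧
    (t * ((!![1, 1; t ^ 2, 1] : Matrix (Fin 2) (Fin 2) ℂ) ^ L) 0 1 +
        ((!![1, 1; t ^ 2, 1] : Matrix (Fin 2) (Fin 2) ℂ) ^ L) 1 1 = (1 + t) ^ L) := by
  have e00 : (!![1, 1; t ^ 2, 1] : Matrix (Fin 2) (Fin 2) ℂ) 0 0 = 1 := rfl
  have e01 : (!![1, 1; t ^ 2, 1] : Matrix (Fin 2) (Fin 2) ℂ) 0 1 = 1 := rfl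
  have e10 : (!![1, 1; t ^ 2, 1] : Matrix (Fin 2) (Fin 2) ℂ) 1 0 = t ^ 2 := rfl
  have e11 : (!![1, 1; t ^ 2, 1] : Matrix (Fin 2) (Fin 2) ℂ) 1 1 = 1 := rfl
  intro L
  induction L with
  | zero => simp [Matrix.one_apply]
  | succ L ih =>
    obtain ⟨ih1, ih2⟩ := ih
    constructor
    · rw [pow_succ]
      simp only [Matrix.mul_apply, Fin.sum_univ_two, e00, e01, e10, e11]
      linear_combination ih1 + t ^ 2 * ih2
    · rw [pow_succ]
      simp only [Matrix.mul_apply, Fin.sum_univ_two, e00, e01, e10, e11]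
      linear_combination ih1 + ih2

theorem stmt11 (L M N k : ℕ) (hL : 1 ≤ L) (hM : 1 ≤ M) (hN : 1 ≤ N)
    (hk : Odd k) (hk1 : 1 ≤ k)
    (K : ℂ → ℂ → Matrix (Fin 2) (Fin 2) ℂ)
    (hK : IsLeftRKCircleM 2 N 1
      (fun z => z ^ (-(M : ℤ)) • (!![1, 1; z ^ k, 1] : Matrix (Fin 2) (Fin 2) ℂ) ^ L) K) :
    ∀ P₁ P₂ : ℂ → ℂ, IsPolyDeg (N - 1) P₁ → IsPolyDeg (N - 1) P₂ →
      ∀ ζ : ℂ,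
        circleIntegral (fun ω =>
          (P₁ (ω ^ 2) + ω ^ k * P₂ (ω ^ 2)) *
            (2 * ω ^ ((1 : ℤ) - 2 * (M : ℤ) - (k : ℤ)) * (1 + ω ^ k) ^ L) *
            ((1 / 2 : ℂ) *
              (ω ^ k * (K (ω ^ 2) (ζ ^ 2) 0 0 + ζ ^ k * K (ω ^ 2) (ζ ^ 2) 0 1) +
                K (ω ^ 2) (ζ ^ 2) 1 0 + ζ ^ k * K (ω ^ 2) (ζ ^ 2) 1 1))) 0 1
          = P₁ (ζ ^ 2) + ζ ^ k * P₂ (ζ ^ 2) := by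
  intro P₁ P₂ hP₁ hP₂ ζ
  obtain ⟨c₁, hc₁⟩ := hP₁
  obtain ⟨c₂, hc₂⟩ := hP₂
  have hP₁c : Continuous P₁ := by
    rw [show P₁ = fun z => ∑ ℓ ∈ Finset.range (N - 1 + 1), c₁ ℓ * z ^ ℓ from funext hc₁]
    fun_prop
  have hP₂c : Continuous P₂ := by
    rw [show P₂ = fun z => ∑ ℓ ∈ Finset.range (N - 1 + 1), c₂ ℓ * z ^ ℓ from funext hc₂]
    fun_prop
  -- the matrix polynomial Q
  set Q : ℂ → Matrix (Fin 2) (Fin 2) ℂ := fun w => !![P₁ w, P₂ w; 0, 0] with hQd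
  have hQ : IsMatPoly 2 2 (N - 1) Q := by
    refine ⟨fun ℓ => !![c₁ ℓ, c₂ ℓ; 0, 0], fun z => ?_⟩
    ext i j
    rw [hQd]
    fin_cases i <;> fin_cases j <;>
      simp [Matrix.sum_apply, Matrix.smul_apply, smul_eq_mul, hc₁ z, hc₂ z, mul_comm]
  have hrep := hK.2.2 Q hQ (ζ ^ 2)
  simp only [] at hrep
  -- entries of the reproducing identity
  have h00 : circleIntegral (fun w =>
      (Q w * (w ^ (-(M:ℤ)) • (!![1, 1; w ^ k, 1] : Matrix (Fin 2) (Fin 2) ℂ) ^ L) *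
        K w (ζ ^ 2)) 0 0) 0 1 = P₁ (ζ ^ 2) := by
    have := congrFun (congrFun hrep 0) 0
    simpa [circleIntegralM, hQd] using this
  have h01 : circleIntegral (fun w =>
      (Q w * (w ^ (-(M:ℤ)) • (!![1, 1; w ^ k, 1] : Matrix (Fin 2) (Fin 2) ℂ) ^ L) *
        K w (ζ ^ 2)) 0 1) 0 1 = P₂ (ζ ^ 2) := by
    have := congrFun (congrFun hrep 0) 1
    simpa [circleIntegralM, hQd] using this
  -- continuity of kernel entries
  obtain ⟨D, hD⟩ := hK.1 (ζ ^ 2)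
  have hKc : ∀ i j : Fin 2, Continuous fun w => K w (ζ ^ 2) i j := by
    intro i j
    have heq : (fun w => K w (ζ ^ 2) i j)
        = fun w => ∑ ℓ ∈ Finset.range (N - 1 + 1), w ^ ℓ * D ℓ i j := by
      funext w
      rw [show K w (ζ ^ 2) = _ from hD w]
      simp [Matrix.sum_apply, Matrix.smul_apply, smul_eq_mul]
    rw [heq]
    fun_prop
  -- continuity of entries of B(w)^L
  have hBc : ∀ i j : Fin 2,
      Continuous fun w : ℂ => ((!![1, 1; w ^ k, 1] : Matrix (Fin 2) (Fin 2) ℂ) ^ L) i j := by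
    have hB : Continuous fun w : ℂ => (!![1, 1; w ^ k, 1] : Matrix (Fin 2) (Fin 2) ℂ) := by
      apply continuous_matrix
      intro i j
      fin_cases i <;> fin_cases j <;> simp <;> fun_prop
    intro i j
    exact (continuous_apply j).comp ((continuous_apply i).comp (hB.pow L))
  have hzp : ∀ n : ℤ, ContinuousOn (fun w : ℂ => w ^ n) (Metric.sphere (0:ℂ) 1) := by
    intro n z hz
    have hz0 : z ≠ 0 := by
      intro h
      rw [h] at hz
      simp at hz
    exact (continuousAt_zpow₀ z n (Or.inl hz0)).continuousWithinAt
  -- explicit formula for entry of triple product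
  have hent : ∀ (w : ℂ) (j : Fin 2),
      (Q w * (w ^ (-(M:ℤ)) • (!![1, 1; w ^ k, 1] : Matrix (Fin 2) (Fin 2) ℂ) ^ L) *
        K w (ζ ^ 2)) 0 j
      = w ^ (-(M:ℤ)) *
        ((P₁ w * ((!![1, 1; w ^ k, 1] : Matrix (Fin 2) (Fin 2) ℂ) ^ L) 0 0 +
            P₂ w * ((!![1, 1; w ^ k, 1] : Matrix (Fin 2) (Fin 2) ℂ) ^ L) 1 0) * K w (ζ ^ 2) 0 j +
          (P₁ w * ((!![1, 1; w ^ k, 1] : Matrix (Fin 2) (Fin 2) ℂ) ^ L) 0 1 +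
            P₂ w * ((!![1, 1; w ^ k, 1] : Matrix (Fin 2) (Fin 2) ℂ) ^ L) 1 1) *
              K w (ζ ^ 2) 1 j) := by
    intro w j
    have q00 : Q w 0 0 = P₁ w := by simp [hQd]
    have q01 : Q w 0 1 = P₂ w := by simp [hQd]
    simp only [Matrix.mul_apply, Fin.sum_univ_two, Matrix.smul_apply, smul_eq_mul, q00, q01]
    ring
  -- the scalar kernel-companion G
  set G : ℂ → ℂ := fun w =>
    (Q w * (w ^ (-(M:ℤ)) • (!![1, 1; w ^ k, 1] : Matrix (Fin 2) (Fin 2) ℂ) ^ L) *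
      K w (ζ ^ 2)) 0 0 +
    ζ ^ k * (Q w * (w ^ (-(M:ℤ)) • (!![1, 1; w ^ k, 1] : Matrix (Fin 2) (Fin 2) ℂ) ^ L) *
      K w (ζ ^ 2)) 0 1 with hGd
  have hej : ∀ j : Fin 2, ContinuousOn (fun w =>
      (Q w * (w ^ (-(M:ℤ)) • (!![1, 1; w ^ k, 1] : Matrix (Fin 2) (Fin 2) ℂ) ^ L) *
        K w (ζ ^ 2)) 0 j) (Metric.sphere (0:ℂ) 1) := by
    intro j
    rw [show (fun w => (Q w * (w ^ (-(M:ℤ)) •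
        (!![1, 1; w ^ k, 1] : Matrix (Fin 2) (Fin 2) ℂ) ^ L) * K w (ζ ^ 2)) 0 j) = _
      from funext fun w => hent w j]
    exact (hzp _).mul (Continuous.continuousOn (by
      exact (((hP₁c.mul (hBc 0 0)).add (hP₂c.mul (hBc 1 0))).mul (hKc 0 j)).add
        ((((hP₁c.mul (hBc 0 1)).add (hP₂c.mul (hBc 1 1))).mul (hKc 1 j)))))
  have hGc : ContinuousOn G (Metric.sphere (0:ℂ) 1) := by
    rw [hGd]
    exact (hej 0).add (continuousOn_const.mul (hej 1))
  have hGval : circleIntegral G 0 1 = P₁ (ζ ^ 2) + ζ ^ k * P₂ (ζ ^ 2) := by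
    rw [hGd]
    have hre : (fun w =>
        (Q w * (w ^ (-(M:ℤ)) • (!![1, 1; w ^ k, 1] : Matrix (Fin 2) (Fin 2) ℂ) ^ L) *
          K w (ζ ^ 2)) 0 0 +
        ζ ^ k * (Q w * (w ^ (-(M:ℤ)) • (!![1, 1; w ^ k, 1] : Matrix (Fin 2) (Fin 2) ℂ) ^ L) *
          K w (ζ ^ 2)) 0 1)
        = fun w =>
        (Q w * (w ^ (-(M:ℤ)) • (!![1, 1; w ^ k, 1] : Matrix (Fin 2) (Fin 2) ℂ) ^ L) *
          K w (ζ ^ 2)) 0 0 -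
        (-(ζ ^ k)) • (Q w * (w ^ (-(M:ℤ)) • (!![1, 1; w ^ k, 1] : Matrix (Fin 2) (Fin 2) ℂ) ^ L) *
          K w (ζ ^ 2)) 0 1 := by
      funext w
      simp only [smul_eq_mul]
      ring
    rw [hre, circleIntegral.integral_sub ((hej 0).circleIntegrable zero_le_one)
      (((continuousOn_const.fun_smul (hej 1))).circleIntegrable zero_le_one),
      circleIntegral.integral_smul, h00, h01]
    simp only [smul_eq_mul]
    ring
  -- the integrand F
  set F : ℂ → ℂ := fun ω =>
    (P₁ (ω ^ 2) + ω ^ k * P₂ (ω ^ 2)) *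
      (2 * ω ^ ((1 : ℤ) - 2 * (M : ℤ) - (k : ℤ)) * (1 + ω ^ k) ^ L) *
      ((1 / 2 : ℂ) *
        (ω ^ k * (K (ω ^ 2) (ζ ^ 2) 0 0 + ζ ^ k * K (ω ^ 2) (ζ ^ 2) 0 1) +
          K (ω ^ 2) (ζ ^ 2) 1 0 + ζ ^ k * K (ω ^ 2) (ζ ^ 2) 1 1)) with hFd
  have hFc : ContinuousOn F (Metric.sphere (0:ℂ) 1) := by
    rw [hFd]
    refine ContinuousOn.mul (ContinuousOn.mul ?_ ?_) ?_
    · exact Continuous.continuousOn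
        ((hP₁c.comp (continuous_pow 2)).add
          ((continuous_pow k).mul (hP₂c.comp (continuous_pow 2))))
    · exact (continuousOn_const.mul (hzp _)).mul
        (Continuous.continuousOn ((continuous_const.add (continuous_pow k)).pow L))
    · refine Continuous.continuousOn (continuous_const.mul ?_)
      exact (((continuous_pow k).mul
          (((hKc 0 0).comp (continuous_pow 2)).add
            (continuous_const.mul ((hKc 0 1).comp (continuous_pow 2))))).add
        ((hKc 1 0).comp (continuous_pow 2))).add
        (continuous_const.mul ((hKc 1 1).comp (continuous_pow 2)))
  have hFnc : ContinuousOn (fun z => F (-z)) (Metric.sphere (0:ℂ) 1) := by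
    refine hFc.comp continuous_neg.continuousOn ?_
    intro z hz
    simp only [Metric.mem_sphere, dist_eq_norm, sub_zero] at hz ⊢
    simpa using hz
  have heven : Even ((1:ℤ) - 2 * (M:ℤ) - (k:ℤ)) := by
    obtain ⟨j, hj⟩ := hk
    exact ⟨-(M:ℤ) - (j:ℤ), by push_cast [hj]; ring⟩
  have key2 : Set.EqOn (fun z => F z - F (-z)) (fun z => 2 * (z * G (z ^ 2)))
      (Metric.sphere (0:ℂ) 1) := by
    intro z hz
    have hz0 : z ≠ 0 := by
      intro h
      rw [h] at hz
      simp at hz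
    have hsq : ((z:ℂ) ^ k) ^ 2 = (z ^ 2) ^ k := pow_right_comm z k 2
    obtain ⟨E1, E2⟩ := eig (z ^ k) L
    rw [hsq] at E1 E2
    obtain ⟨E3, E4⟩ := eig (-(z ^ k)) L
    rw [show (-(z ^ k) : ℂ) ^ 2 = (z ^ 2) ^ k from by rw [← hsq]; ring] at E3 E4
    have hZc : z ^ ((1:ℤ) - 2 * (M:ℤ) - (k:ℤ)) * z ^ k = z * (z ^ 2) ^ (-(M:ℤ)) := by
      have h1 : ((z:ℂ) ^ 2) ^ (-(M:ℤ)) = z ^ ((2:ℤ) * -(M:ℤ)) := by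
        rw [zpow_mul]
        norm_num
      rw [← zpow_natCast z k, ← zpow_add₀ hz0, h1, ← zpow_one_add₀ hz0]
      congr 1
      push_cast
      ring
    simp only [hFd, hGd]
    rw [hent (z ^ 2) 0, hent (z ^ 2) 1]
    rw [show ((-z : ℂ)) ^ 2 = z ^ 2 from by ring, Odd.neg_pow hk, Even.neg_zpow heven]
    linear_combination
      (-(z ^ ((1:ℤ) - 2 * (M:ℤ) - (k:ℤ)) * (P₁ (z ^ 2) + z ^ k * P₂ (z ^ 2)) *
         (K (z ^ 2) (ζ ^ 2) 0 0 + ζ ^ k * K (z ^ 2) (ζ ^ 2) 0 1))) * E1 +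
      (-(z ^ ((1:ℤ) - 2 * (M:ℤ) - (k:ℤ)) * (P₁ (z ^ 2) + z ^ k * P₂ (z ^ 2)) *
         (K (z ^ 2) (ζ ^ 2) 1 0 + ζ ^ k * K (z ^ 2) (ζ ^ 2) 1 1))) * E2 +
      (z ^ ((1:ℤ) - 2 * (M:ℤ) - (k:ℤ)) * (P₁ (z ^ 2) - z ^ k * P₂ (z ^ 2)) *
         (K (z ^ 2) (ζ ^ 2) 0 0 + ζ ^ k * K (z ^ 2) (ζ ^ 2) 0 1)) * E3 +
      (z ^ ((1:ℤ) - 2 * (M:ℤ) - (k:ℤ)) * (P₁ (z ^ 2) - z ^ k * P₂ (z ^ 2)) *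
         (K (z ^ 2) (ζ ^ 2) 1 0 + ζ ^ k * K (z ^ 2) (ζ ^ 2) 1 1)) * E4 +
      (2 * (P₁ (z ^ 2) *
          (((!![1, 1; (z ^ 2) ^ k, 1] : Matrix (Fin 2) (Fin 2) ℂ) ^ L) 0 0 *
              (K (z ^ 2) (ζ ^ 2) 0 0 + ζ ^ k * K (z ^ 2) (ζ ^ 2) 0 1) +
            ((!![1, 1; (z ^ 2) ^ k, 1] : Matrix (Fin 2) (Fin 2) ℂ) ^ L) 0 1 *
              (K (z ^ 2) (ζ ^ 2) 1 0 + ζ ^ k * K (z ^ 2) (ζ ^ 2) 1 1)) +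
        P₂ (z ^ 2) *
          (((!![1, 1; (z ^ 2) ^ k, 1] : Matrix (Fin 2) (Fin 2) ℂ) ^ L) 1 0 *
              (K (z ^ 2) (ζ ^ 2) 0 0 + ζ ^ k * K (z ^ 2) (ζ ^ 2) 0 1) +
            ((!![1, 1; (z ^ 2) ^ k, 1] : Matrix (Fin 2) (Fin 2) ℂ) ^ L) 1 1 *
              (K (z ^ 2) (ζ ^ 2) 1 0 + ζ ^ k * K (z ^ 2) (ζ ^ 2) 1 1)))) * hZc
  have hFint : CircleIntegrable F 0 1 := hFc.circleIntegrable zero_le_one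
  have hFnint : CircleIntegrable (fun z => F (-z)) 0 1 := hFnc.circleIntegrable zero_le_one
  have h2I : (∮ z in C(0, 1), (F z - F (-z))) = 2 * circleIntegral F 0 1 := by
    rw [circleIntegral.integral_sub hFint hFnint, circleIntegral_neg F]
    ring
  have h2G : (∮ z in C(0, 1), (F z - F (-z))) = 2 * circleIntegral G 0 1 := by
    rw [circleIntegral.integral_congr zero_le_one key2]
    have hsm := circleIntegral.integral_smul (2:ℂ) (fun z => z * G (z ^ 2)) 0 1
    simp only [smul_eq_mul] at hsm
    rw [hsm, circleIntegral_sq G hGc]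
  have hfin := mul_left_cancel₀ (two_ne_zero : (2:ℂ) ≠ 0) (h2I.symm.trans h2G)
  rw [hfin, hGval]
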